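/- If D : Fin N \to {-1,1}^m is an injective design and D' : Fin N \to {-1,1}^m is any other injective design (same N, same m), then \sum_{s=1}^m b_s(D) = \sum_{s=1}^m b_s(D'). That is, the total generalized word count is an invariant of the class of unreplicated N-run m-factor two-level designs. -/
import Mathlib


/-- J-characteristic of a two-level design for a word `g`. -/
def Jchar {N m : ℕ} (D : Fin N → Fin m → ℤ) (g : Finset (Fin m)) : ℤ :=
  ∑ h, ∏ i ∈ g, D h i

/-- Generalized word count `b_s`. -/
def gwc {N m : ℕ} (D : Fin N → Fin m → ℤ) (s : ℕ) : ℚ :=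
  (∑ g ∈ Finset.univ.powerset.filter (fun g : Finset (Fin m) => g.card = s),
    ((Jchar D g : ℤ) : ℚ) ^ 2) / (N : ℚ) ^ 2

lemma sum_sq_Jchar (m N : ℕ) (D : Fin N → Fin m → ℤ)
    (hD : ∀ h i, D h i = 1 ∨ D h i = -1) (hinj : Function.Injective D) :
    ∑ g ∈ (Finset.univ : Finset (Fin m)).powerset, ((Jchar D g : ℤ) : ℚ) ^ 2
      = (N : ℚ) * 2 ^ m := by
  have hsq : ∀ g : Finset (Fin m), ((Jchar D g : ℤ) : ℚ) ^ 2
      = ∑ h, ∑ h', ∏ i ∈ g, ((D h i * D h' i : ℤ) : ℚ) := by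
    intro g
    simp only [Jchar]
    push_cast
    rw [sq, Finset.sum_mul_sum]
    refine Finset.sum_congr rfl fun h _ => Finset.sum_congr rfl fun h' _ => ?_
    rw [← Finset.prod_mul_distrib]
  calc ∑ g ∈ (Finset.univ : Finset (Fin m)).powerset, ((Jchar D g : ℤ) : ℚ) ^ 2
      = ∑ h, ∑ h', ∑ g ∈ (Finset.univ : Finset (Fin m)).powerset,
          ∏ i ∈ g, ((D h i * D h' i : ℤ) : ℚ) := by
        simp only [hsq]
        rw [Finset.sum_comm]
        refine Finset.sum_congr rfl fun h _ => Finset.sum_comm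
    _ = ∑ h, ∑ h', ∏ i : Fin m, (1 + ((D h i * D h' i : ℤ) : ℚ)) := by
        refine Finset.sum_congr rfl fun h _ => Finset.sum_congr rfl fun h' _ => ?_
        simp only [add_comm (1:ℚ)]
        rw [Finset.prod_add]
        refine (Finset.sum_congr rfl fun t _ => ?_).symm
        simp
    _ = ∑ h : Fin N, (2 : ℚ) ^ m := by
        refine Finset.sum_congr rfl fun h _ => ?_
        rw [Finset.sum_eq_single_of_mem h (Finset.mem_univ h)]
        · have : ∀ i : Fin m, (1 + ((D h i * D h i : ℤ) : ℚ)) = 2 := by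
            intro i
            rcases hD h i with hv | hv <;> rw [hv] <;> norm_num
          rw [Finset.prod_congr rfl fun i _ => this i, Finset.prod_const,
            Finset.card_univ, Fintype.card_fin]
        · intro h' _ hne
          have hDne : D h ≠ D h' := fun e => hne (hinj e).symm
          obtain ⟨i, hi⟩ := Function.ne_iff.mp hDne
          refine Finset.prod_eq_zero (Finset.mem_univ i) ?_
          rcases hD h i with hv | hv <;> rcases hD h' i with hv' | hv' <;>
            first
              | (exfalso; exact hi (hv.trans hv'.symm))
              | (rw [hv, hv']; norm_num)
    _ = (N : ℚ) * 2 ^ m := by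
        rw [Finset.sum_const, Finset.card_univ, Fintype.card_fin, nsmul_eq_mul]

lemma sum_gwc_eq (m N : ℕ) (hN : 0 < N) (D : Fin N → Fin m → ℤ)
    (hD : ∀ h i, D h i = 1 ∨ D h i = -1) (hinj : Function.Injective D) :
    ∑ s ∈ Finset.Icc 1 m, gwc D s = ((N : ℚ) * 2 ^ m) / (N : ℚ) ^ 2 - 1 := by
  have hN' : (N : ℚ) ≠ 0 := Nat.cast_ne_zero.mpr hN.ne'
  have hfib : ∑ s ∈ Finset.range (m + 1), gwc D s
      = ((N : ℚ) * 2 ^ m) / (N : ℚ) ^ 2 := by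
    simp only [gwc, ← Finset.sum_div]
    congr 1
    rw [← sum_sq_Jchar m N D hD hinj]
    refine Finset.sum_fiberwise_of_maps_to (fun g hg => ?_) _
    rw [Finset.mem_range, Nat.lt_succ_iff]
    exact le_trans (Finset.card_le_card (Finset.mem_powerset.mp hg))
      (by simp [Finset.card_univ])
  have hzero : gwc D 0 = 1 := by
    have hfilter : (Finset.univ : Finset (Fin m)).powerset.filter
        (fun g : Finset (Fin m) => g.card = 0) = {∅} := by
      ext g
      simp [Finset.card_eq_zero]
    have hJ : Jchar D ∅ = (N : ℤ) := by
      simp [Jchar]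
    rw [gwc, hfilter]
    simp [hJ, div_self (pow_ne_zero 2 hN')]
  have hins : Finset.range (m + 1) = insert 0 (Finset.Icc 1 m) := by
    ext s
    rcases Nat.eq_zero_or_pos s with h | h <;>
      simp [h, Nat.lt_succ_iff, Finset.mem_Icc] <;> omega
  rw [hins, Finset.sum_insert (by simp), hzero] at hfib
  linarith

/-- The total generalized word count is an invariant of the class of
unreplicated `N`-run `m`-factor two-level designs: any two injective designs
have equal totals. -/
theorem sum_gwc_invariant (m N : ℕ) (hN : 0 < N)
    (D D' : Fin N → Fin m → ℤ)
    (hD : ∀ h i, D h i = 1 ∨ D h i = -1)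
    (hD' : ∀ h i, D' h i = 1 ∨ D' h i = -1)
    (hinj : Function.Injective D) (hinj' : Function.Injective D') :
    ∑ s ∈ Finset.Icc 1 m, gwc D s = ∑ s ∈ Finset.Icc 1 m, gwc D' s := by
  rw [sum_gwc_eq m N hN D hD hinj, sum_gwc_eq m N hN D' hD' hinj']
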